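/- Let n ≥ 2, let Ω ⊆ ℝⁿ be a bounded open set with C² boundary, and let (u^{m_k})₁^∞ ⊆ C²(Ω) ∩ C⁰(cl Ω) be harmonic functions with boundary values g^{m_k} satisfying a uniform Lipschitz-and-sup bound Lip(g^{m_k},∂Ω) + max_{∂Ω}|g^{m_k}| ≤ C. Suppose g^{m_k} → g uniformly on ∂Ω, u^{m_k} → u locally uniformly in Ω with u ∈ C²(Ω) harmonic, and the sequence (u^{m_k}) is uniformly bounded in W^{1,p}(Ω) for some p > n. Then u^{m_k} → u uniformly on cl Ω, u extends to C⁰(cl Ω) with u = g on ∂Ω, and hence u solves the Dirichlet problem Δu = 0 in Ω, u = g on ∂Ω. -/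

import Mathlib

open MeasureTheory Metric Set Filter
open scoped ENNReal NNReal Topology

noncomputable section

/-- A bounded open set has `C²` boundary: near each boundary point, the set and its
boundary are the sublevel/level set of a `C²` defining function with nonvanishing gradient. -/
def HasC2Boundary {n : ℕ} (Ω : Set (EuclideanSpace ℝ (Fin n))) : Prop :=
  ∀ x ∈ frontier Ω, ∃ (U : Set (EuclideanSpace ℝ (Fin n))) (φ : EuclideanSpace ℝ (Fin n) → ℝ),
    IsOpen U ∧ x ∈ U ∧ ContDiff ℝ 2 φ ∧ (∀ y ∈ U, fderiv ℝ φ y ≠ 0) ∧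
    (Ω ∩ U = {y ∈ U | φ y < 0}) ∧ (frontier Ω ∩ U = {y ∈ U | φ y = 0})

/-- The Laplacian `Δu(x) = ∑ᵢ ∂²u/∂xᵢ²(x)`. -/
def laplacian {n : ℕ} (u : EuclideanSpace ℝ (Fin n) → ℝ) (x : EuclideanSpace ℝ (Fin n)) : ℝ :=
  ∑ i : Fin n, iteratedFDeriv ℝ 2 u x ![EuclideanSpace.single i 1, EuclideanSpace.single i 1]

variable {n : ℕ}

local notation "E" => EuclideanSpace ℝ (Fin n)

/-- The line `t ↦ x + t • v` has derivative `v`. -/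
lemma line_hasDerivAt (x v : E) (t : ℝ) :
    HasDerivAt (fun t : ℝ => x + t • v) v t := by
  simpa using ((hasDerivAt_id t).smul_const v).const_add x

lemma second_deriv_line {f : E → ℝ} {x : E} (hf : ContDiffAt ℝ 2 f x) (v : E) :
    deriv (deriv (fun t : ℝ => f (x + t • v))) 0 = iteratedFDeriv ℝ 2 f x ![v, v] := by
  obtain ⟨s, hs_nhds, hfs⟩ := hf.contDiffOn le_rfl (by simp)
  obtain ⟨t, hts, htopen, hxt⟩ := _root_.mem_nhds_iff.1 hs_nhds
  have hft : ContDiffOn ℝ 2 f t := hfs.mono hts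
  have hdiff : ∀ y ∈ t, DifferentiableAt ℝ f y := fun y hy =>
    (hft.contDiffAt (htopen.mem_nhds hy)).differentiableAt two_ne_zero
  -- near 0, `deriv` of the line function is `fderiv f (x + t • v) v`
  have hmem : ∀ᶠ τ in 𝓝 (0 : ℝ), x + τ • v ∈ t := by
    have hc : Continuous fun τ : ℝ => x + τ • v := by continuity
    exact hc.continuousAt (x := (0:ℝ)) (htopen.mem_nhds (by simpa using hxt))
  have hderiv_eq : (deriv (fun τ : ℝ => f (x + τ • v)))
      =ᶠ[𝓝 (0 : ℝ)] fun τ => fderiv ℝ f (x + τ • v) v := by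
    filter_upwards [hmem] with τ hτ
    exact (((hdiff _ hτ).hasFDerivAt).comp_hasDerivAt τ (line_hasDerivAt x v τ)).deriv
  rw [hderiv_eq.deriv_eq]
  -- the derivative of `τ ↦ fderiv f (x + τ • v) v` at `0`
  have hdf : DifferentiableAt ℝ (fderiv ℝ f) x :=
    (hf.fderiv_right (m := 1) (by norm_num)).differentiableAt (by norm_num)
  have h1 : HasDerivAt (fun τ : ℝ => fderiv ℝ f (x + τ • v))
      (fderiv ℝ (fderiv ℝ f) x v) 0 := by
    have hfd : HasFDerivAt (fderiv ℝ f) (fderiv ℝ (fderiv ℝ f) x)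
        ((fun τ : ℝ => x + τ • v) 0) := by simpa using hdf.hasFDerivAt
    exact hfd.comp_hasDerivAt 0 (line_hasDerivAt x v 0)
  have h2 : HasDerivAt (fun τ : ℝ => fderiv ℝ f (x + τ • v) v)
      (fderiv ℝ (fderiv ℝ f) x v v) 0 := by
    simpa using h1.clm_apply (hasDerivAt_const 0 v)
  rw [h2.deriv, iteratedFDeriv_two_apply]
  simp

/-- Second derivative test: at an interior local max of a `C²` function, `f'' ≤ 0`. -/
lemma second_deriv_nonpos_of_isLocalMax {g : ℝ → ℝ} (hg : ContDiffAt ℝ 2 g 0)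
    (hmax : IsLocalMax g 0) : deriv (deriv g) 0 ≤ 0 := by
  by_contra hpos
  push_neg at hpos
  obtain ⟨s, hs_nhds, hgs⟩ := hg.contDiffOn le_rfl (by simp)
  obtain ⟨r, hr, hball⟩ := Metric.mem_nhds_iff.1 hs_nhds
  have hgs' : ContDiffOn ℝ 2 g (Metric.ball 0 r) := hgs.mono hball
  have hd0 : deriv g 0 = 0 := hmax.deriv_eq_zero
  -- deriv g is differentiable at 0
  have hdd : DifferentiableAt ℝ (deriv g) 0 := by
    have h1 : DifferentiableAt ℝ (fun y => fderiv ℝ g y 1) 0 :=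
      ((hg.fderiv_right (m := 1) (by norm_num)).differentiableAt (by norm_num)).clm_apply
        (differentiableAt_const 1)
    have : (fun y => fderiv ℝ g y 1) = deriv g := by
      funext y; exact fderiv_apply_one_eq_deriv
    rwa [this] at h1
  have hslope : Tendsto (slope (deriv g) 0) (𝓝[≠] 0) (𝓝 (deriv (deriv g) 0)) :=
    hasDerivAt_iff_tendsto_slope.1 hdd.hasDerivAt
  have hslope' : ∀ᶠ t in 𝓝[>] (0:ℝ), 0 < slope (deriv g) 0 t :=
    (hslope.mono_left (nhdsWithin_mono 0 (fun t ht => ne_of_gt ht))).eventually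
      (eventually_gt_nhds hpos)
  have hmax' : ∀ᶠ t in 𝓝[>] (0:ℝ), g t ≤ g 0 :=
    (hmax.filter_mono nhdsWithin_le_nhds)
  have hsmall : ∀ᶠ t in 𝓝[>] (0:ℝ), t < r :=
    eventually_nhdsWithin_of_eventually_nhds (eventually_lt_nhds hr)
  obtain ⟨c, hc, hIoo⟩ := mem_nhdsGT_iff_exists_Ioo_subset.1
    (hslope'.and (hmax'.and hsmall) : _)
  rw [Set.mem_Ioi] at hc
  -- pick a point b strictly between 0 and c
  set b := c / 2 with hb
  have hb0 : 0 < b := by positivity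
  have hbc : b < c := by linarith
  have hbr : b < r := (hIoo ⟨hb0, hbc⟩).2.2
  -- g is strictly monotone on [0, b]
  have hmono : StrictMonoOn g (Set.Icc 0 b) := by
    apply strictMonoOn_of_deriv_pos (convex_Icc _ _)
    · apply hgs'.continuousOn.mono
      intro t ht
      simp only [Metric.mem_ball, Real.dist_eq, sub_zero]
      rw [abs_of_nonneg ht.1]
      exact lt_of_le_of_lt ht.2 hbr
    · intro t ht
      rw [interior_Icc] at ht
      have htc : t ∈ Set.Ioo (0:ℝ) c := ⟨ht.1, lt_trans ht.2 hbc⟩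
      have := (hIoo htc).1
      rw [slope_def_field, hd0, sub_zero, sub_zero, div_pos_iff] at this
      rcases this with h | h
      · exact h.1
      · linarith [h.2, ht.1]
  have h1 : g 0 < g b := hmono (Set.left_mem_Icc.2 hb0.le)
    (Set.mem_Icc.2 ⟨hb0.le, le_rfl⟩) hb0
  have h2 : g b ≤ g 0 := (hIoo ⟨hb0, hbc⟩).2.1
  linarith

/-- The Laplacian of a difference on an open set. -/
lemma laplacian_sub_of_isOpen {Ω : Set (EuclideanSpace ℝ (Fin n))} (hΩ : IsOpen Ω)
    {f g : EuclideanSpace ℝ (Fin n) → ℝ} (hf : ContDiffOn ℝ 2 f Ω) (hg : ContDiffOn ℝ 2 g Ω)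
    {x : EuclideanSpace ℝ (Fin n)} (hx : x ∈ Ω) :
    laplacian (fun y => f y - g y) x = laplacian f x - laplacian g x := by
  have hu : UniqueDiffOn ℝ Ω := hΩ.uniqueDiffOn
  have key : iteratedFDeriv ℝ 2 (fun y => f y - g y) x =
      iteratedFDeriv ℝ 2 f x - iteratedFDeriv ℝ 2 g x := by
    rw [← iteratedFDerivWithin_of_isOpen (𝕜 := ℝ) (f := fun y => f y - g y) 2 hΩ hx,
      ← iteratedFDerivWithin_of_isOpen (𝕜 := ℝ) (f := f) 2 hΩ hx,
      ← iteratedFDerivWithin_of_isOpen (𝕜 := ℝ) (f := g) 2 hΩ hx]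
    have heq : (fun y => f y - g y) = fun y => f y + -(g y) := by
      funext y; ring
    rw [heq, iteratedFDerivWithin_add_apply' (hf x hx) (hg.neg x hx) hu hx,
      show (fun y => -(g y)) = -g from rfl,
      iteratedFDerivWithin_neg_apply hu hx, sub_eq_add_neg]
  unfold laplacian
  rw [← Finset.sum_sub_distrib]
  exact Finset.sum_congr rfl fun i _ => by rw [key]; rfl

/-- The Laplacian of `f + c • g` on an open set, with `g` globally `C²`. -/
lemma laplacian_add_smul_of_isOpen {Ω : Set (EuclideanSpace ℝ (Fin n))} (hΩ : IsOpen Ω)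
    {f g : EuclideanSpace ℝ (Fin n) → ℝ} (hf : ContDiffOn ℝ 2 f Ω) (hg : ContDiffOn ℝ 2 g Ω)
    (c : ℝ) {x : EuclideanSpace ℝ (Fin n)} (hx : x ∈ Ω) :
    laplacian (fun y => f y + c * g y) x = laplacian f x + c * laplacian g x := by
  have hu : UniqueDiffOn ℝ Ω := hΩ.uniqueDiffOn
  have hcg : ContDiffOn ℝ 2 (fun y => c * g y) Ω := hg.const_smul c
  have key : iteratedFDeriv ℝ 2 (fun y => f y + c * g y) x =
      iteratedFDeriv ℝ 2 f x + c • iteratedFDeriv ℝ 2 g x := by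
    rw [← iteratedFDerivWithin_of_isOpen (𝕜 := ℝ) (f := fun y => f y + c * g y) 2 hΩ hx,
      ← iteratedFDerivWithin_of_isOpen (𝕜 := ℝ) (f := f) 2 hΩ hx,
      ← iteratedFDerivWithin_of_isOpen (𝕜 := ℝ) (f := g) 2 hΩ hx,
      iteratedFDerivWithin_add_apply' (hf x hx) (hcg x hx) hu hx]
    congr 1
    have heq : (fun y => c * g y) = c • g := by funext y; simp
    rw [heq, iteratedFDerivWithin_const_smul_apply (hg x hx) hu hx]
  unfold laplacian
  rw [Finset.mul_sum, ← Finset.sum_add_distrib]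
  exact Finset.sum_congr rfl fun i _ => by rw [key]; rfl

lemma deriv2_sq (c d : ℝ) : deriv (deriv (fun t : ℝ => (c + t * d)^2)) 0 = 2 * d^2 := by
  have hb : ∀ t : ℝ, HasDerivAt (fun t : ℝ => c + t * d) d t := fun t => by
    simpa using ((hasDerivAt_id t).mul_const d).const_add c
  have h1 : ∀ t : ℝ, HasDerivAt (fun t : ℝ => (c + t * d)^2) (2*(c + t*d)*d) t := fun t => by
    have := (hb t).pow 2
    rw [show (fun t : ℝ => (c + t * d)^2) = (fun t : ℝ => c + t * d)^2 from rfl]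
    refine this.congr_deriv ?_
    norm_num
  have hderiv : deriv (fun t : ℝ => (c + t * d)^2) = fun t => 2*(c+t*d)*d :=
    funext fun t => (h1 t).deriv
  rw [hderiv]
  have h2 : HasDerivAt (fun t : ℝ => 2*(c + t*d)*d) (2*d*d) 0 :=
    ((hb 0).const_mul 2).mul_const d
  rw [h2.deriv]; ring

lemma contDiff_sq_coord (i0 : Fin n) : ContDiff ℝ 2 (fun y : EuclideanSpace ℝ (Fin n) => (y i0)^2) := by
  have h : ContDiff ℝ 2 (fun y : EuclideanSpace ℝ (Fin n) => EuclideanSpace.proj (𝕜 := ℝ) i0 y) :=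
    (EuclideanSpace.proj (𝕜 := ℝ) i0 : EuclideanSpace ℝ (Fin n) →L[ℝ] ℝ).contDiff
  exact h.pow 2

lemma laplacian_sq_coord (i0 : Fin n) (x : EuclideanSpace ℝ (Fin n)) :
    laplacian (fun y : EuclideanSpace ℝ (Fin n) => (y i0)^2) x = 2 := by
  unfold laplacian
  have hterm : ∀ i : Fin n,
      iteratedFDeriv ℝ 2 (fun y : EuclideanSpace ℝ (Fin n) => (y i0)^2) x
        ![EuclideanSpace.single i 1, EuclideanSpace.single i 1]
      = 2 * (if i0 = i then (1:ℝ) else 0)^2 := by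
    intro i
    rw [← second_deriv_line (contDiff_sq_coord i0).contDiffAt (EuclideanSpace.single i 1)]
    have hline : (fun t : ℝ => ((x + t • EuclideanSpace.single i (1:ℝ)) i0)^2)
        = fun t : ℝ => (x i0 + t * (if i0 = i then (1:ℝ) else 0))^2 := by
      funext t
      congr 1
      simp [PiLp.add_apply, PiLp.smul_apply, EuclideanSpace.single_apply, smul_eq_mul]
    rw [hline, deriv2_sq]
  rw [Finset.sum_congr rfl fun i _ => hterm i]
  have : ∀ i : Fin n, 2 * (if i0 = i then (1:ℝ) else 0)^2 = if i0 = i then 2 else 0 := by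
    intro i; split <;> norm_num
  rw [Finset.sum_congr rfl fun i _ => this i, Finset.sum_ite_eq]
  simp

/-- Weak maximum principle for harmonic functions on a bounded open set. -/
lemma max_principle (hn : 2 ≤ n) {Ω : Set (EuclideanSpace ℝ (Fin n))} (hΩopen : IsOpen Ω)
    (hΩbdd : Bornology.IsBounded Ω) {w : EuclideanSpace ℝ (Fin n) → ℝ}
    (hw2 : ContDiffOn ℝ 2 w Ω) (hw0 : ContinuousOn w (closure Ω))
    (hharm : ∀ x ∈ Ω, laplacian w x = 0) {M : ℝ}
    (hM : ∀ x ∈ frontier Ω, w x ≤ M) : ∀ x ∈ closure Ω, w x ≤ M := by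
  rcases Ω.eq_empty_or_nonempty with h | hne
  · simp [h]
  have hn0 : 0 < n := by omega
  set i0 : Fin n := ⟨0, hn0⟩ with hi0
  set q : EuclideanSpace ℝ (Fin n) → ℝ := fun y => (y i0)^2 with hqdef
  have hqCD : ContDiff ℝ 2 q := contDiff_sq_coord i0
  obtain ⟨r, hr⟩ := hΩbdd.subset_closedBall 0
  have hclos : closure Ω ⊆ Metric.closedBall 0 r :=
    closure_minimal hr Metric.isClosed_closedBall
  set R := r^2 with hRdef
  have hqR : ∀ y ∈ closure Ω, q y ≤ R := by
    intro y hy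
    have hnorm2 : ‖y‖^2 = ∑ i, ‖y i‖^2 := by
      rw [EuclideanSpace.norm_eq]
      exact Real.sq_sqrt (Finset.sum_nonneg fun i _ => sq_nonneg _)
    have h1 : q y ≤ ‖y‖^2 := by
      have hsq : q y = ‖y i0‖^2 := by simp [hqdef, Real.norm_eq_abs, sq_abs]
      rw [hsq, hnorm2]
      exact Finset.single_le_sum (f := fun i => ‖y i‖^2) (fun i _ => sq_nonneg _) (Finset.mem_univ i0)
    have h2 : ‖y‖ ≤ r := by
      have := hclos hy
      rwa [Metric.mem_closedBall, dist_zero_right] at this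
    calc q y ≤ ‖y‖^2 := h1
      _ ≤ r^2 := pow_le_pow_left₀ (norm_nonneg _) h2 2
  have hkey : ∀ ε > (0:ℝ), ∀ x ∈ closure Ω, w x ≤ M + ε * R := by
    intro ε hε x hx
    set wε : EuclideanSpace ℝ (Fin n) → ℝ := fun y => w y + ε * q y with hwεdef
    have hwεcont : ContinuousOn wε (closure Ω) :=
      hw0.add ((continuous_const.mul hqCD.continuous).continuousOn)
    obtain ⟨x₀, hx₀, hmax⟩ := hΩbdd.isCompact_closure.exists_isMaxOn hne.closure hwεcont
    have hx₀front : x₀ ∈ frontier Ω := by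
      by_contra hnot
      have hx₀Ω : x₀ ∈ Ω := by
        by_contra hno
        exact hnot ⟨hx₀, by rwa [hΩopen.interior_eq]⟩
      have hloc : IsLocalMax wε x₀ :=
        hmax.isLocalMax (mem_of_superset (hΩopen.mem_nhds hx₀Ω) subset_closure)
      have hwεCD : ContDiffAt ℝ 2 wε x₀ :=
        (hw2.contDiffAt (hΩopen.mem_nhds hx₀Ω)).add ((contDiff_const.mul hqCD).contDiffAt)
      have hterm : ∀ i : Fin n, iteratedFDeriv ℝ 2 wε x₀
          ![EuclideanSpace.single i 1, EuclideanSpace.single i 1] ≤ 0 := by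
        intro i
        rw [← second_deriv_line hwεCD (EuclideanSpace.single i 1)]
        have hlineCD : ContDiff ℝ 2 (fun t : ℝ => x₀ + t • (EuclideanSpace.single i (1:ℝ))) :=
          ContDiff.add contDiff_const (contDiff_id.smul contDiff_const)
        apply second_deriv_nonpos_of_isLocalMax
        · exact ContDiffAt.comp (0:ℝ) (by simpa using hwεCD) hlineCD.contDiffAt
        · have htend : Tendsto (fun t : ℝ => x₀ + t • (EuclideanSpace.single i (1:ℝ)))
              (𝓝 0) (𝓝 x₀) := by
            simpa using hlineCD.continuous.tendsto 0
          exact (htend.eventually hloc).mono fun t ht => by simpa using ht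
      have hsum : laplacian wε x₀ ≤ 0 := by
        unfold laplacian
        exact Finset.sum_nonpos fun i _ => hterm i
      have hcalc : laplacian wε x₀ = 2 * ε := by
        rw [hwεdef]
        rw [laplacian_add_smul_of_isOpen hΩopen hw2 hqCD.contDiffOn ε hx₀Ω,
          hharm x₀ hx₀Ω, laplacian_sq_coord]
        ring
      rw [hcalc] at hsum
      linarith
    have h1 : wε x ≤ wε x₀ := hmax hx
    have h2 : w x ≤ wε x := by
      have : 0 ≤ ε * q x := mul_nonneg hε.le (sq_nonneg _)
      simp only [hwεdef]
      linarith
    have h3 : wε x₀ ≤ M + ε * R := by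
      have := hqR x₀ hx₀
      have hMx₀ := hM x₀ hx₀front
      simp only [hwεdef]
      nlinarith
    linarith
  intro x hx
  have hR0 : 0 ≤ R := sq_nonneg r
  by_contra hlt
  push_neg at hlt
  set a := w x - M with ha
  have ha0 : 0 < a := by simp [ha]; linarith
  have := hkey (a/(R+1)) (by positivity) x hx
  have hRlt : a/(R+1)*R < a := by
    rw [div_mul_eq_mul_div, div_lt_iff₀ (by linarith)]
    nlinarith
  linarith

/-- Let `(u^{m_k}) ⊆ C²(Ω) ∩ C⁰(cl Ω)` be harmonic with boundary values
`g^{m_k}` satisfying a uniform Lipschitz-and-sup bound. If `g^{m_k} → g` uniformly on `∂Ω`,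
`u^{m_k} → u` locally uniformly in `Ω` with `u ∈ C²(Ω)` harmonic, and the sequence is
uniformly bounded in `W^{1,p}(Ω)` for some `p > n`, then `u^{m_k} → u` uniformly on `cl Ω`,
`u` extends continuously to `cl Ω` with `u = g` on `∂Ω`, and this extension solves the
Dirichlet problem `Δu = 0` in `Ω`, `u = g` on `∂Ω`. -/
theorem uniform_convergence_dirichlet_limit {n : ℕ} (hn : 2 ≤ n)
    (Ω : Set (EuclideanSpace ℝ (Fin n))) (hΩopen : IsOpen Ω)
    (hΩbdd : Bornology.IsBounded Ω) (hΩC2 : HasC2Boundary Ω)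
    (C : ℝ) (hC : 0 < C)
    (g : ℕ → EuclideanSpace ℝ (Fin n) → ℝ)
    (u : ℕ → EuclideanSpace ℝ (Fin n) → ℝ)
    (glim : EuclideanSpace ℝ (Fin n) → ℝ)
    (ulim : EuclideanSpace ℝ (Fin n) → ℝ)
    (p : ℝ) (hpn : (n : ℝ) < p)
    (hgcont : ∀ k, ContinuousOn (g k) (frontier Ω))
    (hgbound : ∀ k, ∃ L M : ℝ, 0 ≤ L ∧ 0 ≤ M ∧ L + M ≤ C ∧
      (∀ x ∈ frontier Ω, ∀ y ∈ frontier Ω, |g k x - g k y| ≤ L * ‖x - y‖) ∧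
      (∀ x ∈ frontier Ω, |g k x| ≤ M))
    (huC2 : ∀ k, ContDiffOn ℝ 2 (u k) Ω)
    (huC0 : ∀ k, ContinuousOn (u k) (closure Ω))
    (huharm : ∀ k, ∀ x ∈ Ω, laplacian (u k) x = 0)
    (hubdry : ∀ k, ∀ x ∈ frontier Ω, u k x = g k x)
    (hgconv : TendstoUniformlyOn g glim Filter.atTop (frontier Ω))
    (hulocunif : ∀ K : Set (EuclideanSpace ℝ (Fin n)), IsCompact K → K ⊆ Ω →
      TendstoUniformlyOn u ulim Filter.atTop K)
    (hulimC2 : ContDiffOn ℝ 2 ulim Ω)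
    (hulimharm : ∀ x ∈ Ω, laplacian ulim x = 0)
    (hW1p : ∃ C' : ℝ, 0 ≤ C' ∧ ∀ k : ℕ,
      eLpNorm (u k) (ENNReal.ofReal p) (volume.restrict Ω) +
        eLpNorm (fun x => fderiv ℝ (u k) x) (ENNReal.ofReal p) (volume.restrict Ω)
      ≤ ENNReal.ofReal C') :
    ∃ v : EuclideanSpace ℝ (Fin n) → ℝ,
      (∀ x ∈ Ω, v x = ulim x) ∧
      ContinuousOn v (closure Ω) ∧
      (∀ x ∈ frontier Ω, v x = glim x) ∧
      TendstoUniformlyOn u v Filter.atTop (closure Ω) ∧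
      (∀ x ∈ Ω, laplacian v x = 0) := by
  
  have hfrontsub : frontier Ω ⊆ closure Ω := frontier_subset_closure
  have hgCauchy := hgconv.uniformCauchySeqOn
  have key : ∀ ε > (0:ℝ), ∃ N : ℕ, ∀ m ≥ N, ∀ l ≥ N, ∀ x ∈ closure Ω,
      |u m x - u l x| ≤ ε := by
    intro ε hε
    obtain ⟨N, hN⟩ := Metric.uniformCauchySeqOn_iff.1 hgCauchy (ε/2) (by positivity)
    refine ⟨N, fun m hm l hl x hx => ?_⟩
    have hbound : ∀ y ∈ frontier Ω, |u m y - u l y| ≤ ε/2 := by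
      intro y hy
      rw [hubdry m y hy, hubdry l y hy, ← Real.dist_eq]
      exact (hN m hm l hl y hy).le
    have h1 : ∀ z ∈ closure Ω, u m z - u l z ≤ ε/2 :=
      max_principle hn hΩopen hΩbdd ((huC2 m).sub (huC2 l)) ((huC0 m).sub (huC0 l))
        (fun z hz => by
          rw [laplacian_sub_of_isOpen hΩopen (huC2 m) (huC2 l) hz,
            huharm m z hz, huharm l z hz]; ring)
        (fun y hy => (abs_le.1 (hbound y hy)).2)
    have h2 : ∀ z ∈ closure Ω, u l z - u m z ≤ ε/2 :=
      max_principle hn hΩopen hΩbdd ((huC2 l).sub (huC2 m)) ((huC0 l).sub (huC0 m))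
        (fun z hz => by
          rw [laplacian_sub_of_isOpen hΩopen (huC2 l) (huC2 m) hz,
            huharm m z hz, huharm l z hz]; ring)
        (fun y hy => by
          have := (abs_le.1 (hbound y hy)).1; linarith)
    have := abs_le.2 ⟨by linarith [h2 x hx], h1 x hx⟩
    linarith
  set v : EuclideanSpace ℝ (Fin n) → ℝ := fun x => limUnder atTop (fun k => u k x) with hv
  have htend : ∀ x ∈ closure Ω, Tendsto (fun k => u k x) atTop (𝓝 (v x)) := by
    intro x hx
    have hc : CauchySeq (fun k => u k x) := by
      rw [Metric.cauchySeq_iff]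
      intro ε hε
      obtain ⟨N, hN⟩ := key (ε/2) (by positivity)
      exact ⟨N, fun m hm l hl => by
        rw [Real.dist_eq]; have := hN m hm l hl x hx; linarith⟩
    obtain ⟨L, hL⟩ := cauchySeq_tendsto_of_complete hc
    simp only [hv]
    rw [hL.limUnder_eq]
    exact hL
  have hUC : UniformCauchySeqOn u atTop (closure Ω) := by
    rw [Metric.uniformCauchySeqOn_iff]
    intro ε hε
    obtain ⟨N, hN⟩ := key (ε/2) (by positivity)
    exact ⟨N, fun m hm l hl x hx => by
      rw [Real.dist_eq]; have := hN m hm l hl x hx; linarith⟩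
  have hTU : TendstoUniformlyOn u v atTop (closure Ω) :=
    hUC.tendstoUniformlyOn_of_tendsto htend
  have hvΩ : ∀ x ∈ Ω, v x = ulim x := by
    intro x hx
    have h1 := htend x (subset_closure hx)
    have h2 : Tendsto (fun k => u k x) atTop (𝓝 (ulim x)) :=
      (hulocunif {x} isCompact_singleton (Set.singleton_subset_iff.2 hx)).tendsto_at rfl
    exact tendsto_nhds_unique h1 h2
  refine ⟨v, hvΩ, hTU.continuousOn (Filter.Frequently.of_forall huC0), ?_, hTU, ?_⟩
  · intro x hx
    have h1 := htend x (hfrontsub hx)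
    have h2 : Tendsto (fun k => u k x) atTop (𝓝 (glim x)) := by
      have hgx := hgconv.tendsto_at hx
      have heq : (fun k => u k x) = fun k => g k x := funext fun k => hubdry k x hx
      rwa [heq]
    exact tendsto_nhds_unique h1 h2
  · intro x hx
    have hEq : iteratedFDeriv ℝ 2 v x = iteratedFDeriv ℝ 2 ulim x := by
      rw [← iteratedFDerivWithin_of_isOpen (𝕜:=ℝ) (f:=v) 2 hΩopen hx,
        ← iteratedFDerivWithin_of_isOpen (𝕜:=ℝ) (f:=ulim) 2 hΩopen hx]
      exact iteratedFDerivWithin_congr hvΩ hx 2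
    have : laplacian v x = laplacian ulim x := by
      unfold laplacian
      rw [hEq]
    rw [this]
    exact hulimharm x hx
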